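/- Let A₁, …, A_k be finite nonempty sets of integers (k ≥ 2). Let S = A₁ + ⋯ + A_k and, for each i, S_i = A₁ + ⋯ + A_{i−1} + A_{i+1} + ⋯ + A_k (the sum omitting A_i). Then (k − 1)|S| ≥ (∑_{i=1}^k |S_i|) − 1. -/

import Mathlib

open Pointwise Finset

private def GMRchain (S : Finset ℤ) (T : ℕ → Finset ℤ) (a b : ℕ → ℤ) : ℕ → Finset ℤ
  | 0 => S
  | j + 1 =>
      ({b j - a j} : Finset ℤ) +
        (GMRchain S T a b j ∩ (({a j} : Finset ℤ) + T j))

theorem superadditivity_many_sets (k : ℕ) (hk : 2 ≤ k) (A : Fin k → Finset ℤ)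
    (hA : ∀ i, (A i).Nonempty) :
    (∑ i, (∑ j ∈ Finset.univ.erase i, A j).card) - 1 ≤ (k - 1) * (∑ i, A i).card := by
  classical
  -- extend A to ℕ
  set B : ℕ → Finset ℤ := fun n => if h : n < k then A ⟨n, h⟩ else 0 with hBdef
  have hB : ∀ n, (B n).Nonempty := by
    intro n
    by_cases h : n < k
    · simpa [hBdef, h] using hA ⟨n, h⟩
    · refine ⟨0, ?_⟩
      simp [hBdef, h]
  set a : ℕ → ℤ := fun n => (B n).min' (hB n) with hadef
  set b : ℕ → ℤ := fun n => (B n).max' (hB n) with hbdef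
  set S : Finset ℤ := ∑ n ∈ range k, B n with hSdef
  set T : ℕ → Finset ℤ := fun n => ∑ m ∈ (range k).erase n, B m with hTdef
  have hTS : ∀ n, n < k → T n + B n = S := fun n hn =>
    Finset.sum_erase_add (range k) B (mem_range.2 hn)
  -- lower/upper bounds for elements of sums
  have L1 : ∀ s : Finset ℕ, ∀ x ∈ ∑ m ∈ s, B m, (∑ m ∈ s, a m) ≤ x := by
    intro s
    induction s using Finset.induction_on with
    | empty =>
      intro x hx
      simp only [Finset.sum_empty] at hx ⊢
      rw [Finset.mem_zero] at hx
      omega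
    | insert m s hm ih =>
      intro x hx
      rw [Finset.sum_insert hm] at hx
      rw [Finset.sum_insert hm]
      rcases Finset.mem_add.1 hx with ⟨y, hy, z, hz, hyz⟩
      have h1 : a m ≤ y := Finset.min'_le _ _ hy
      have h2 : (∑ m ∈ s, a m) ≤ z := ih z hz
      omega
  have L2 : ∀ s : Finset ℕ, ∀ x ∈ ∑ m ∈ s, B m, x ≤ ∑ m ∈ s, b m := by
    intro s
    induction s using Finset.induction_on with
    | empty =>
      intro x hx
      simp only [Finset.sum_empty] at hx ⊢
      rw [Finset.mem_zero] at hx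
      omega
    | insert m s hm ih =>
      intro x hx
      rw [Finset.sum_insert hm] at hx
      rw [Finset.sum_insert hm]
      rcases Finset.mem_add.1 hx with ⟨y, hy, z, hz, hyz⟩
      have h1 : y ≤ b m := Finset.le_max' _ _ hy
      have h2 : z ≤ ∑ m ∈ s, b m := ih z hz
      omega
  -- translates of T n sit inside S
  have hYsub : ∀ n, n < k → ({a n} : Finset ℤ) + T n ⊆ S := by
    intro n hn x hx
    rcases Finset.mem_add.1 hx with ⟨y, hy, z, hz, hyz⟩
    rw [Finset.mem_singleton] at hy
    rw [← hTS n hn]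
    exact Finset.mem_add.2 ⟨z, hz, a n, Finset.min'_mem _ _, by omega⟩
  have hbsub : ∀ n, n < k → ({b n} : Finset ℤ) + T n ⊆ S := by
    intro n hn x hx
    rcases Finset.mem_add.1 hx with ⟨y, hy, z, hz, hyz⟩
    rw [Finset.mem_singleton] at hy
    rw [← hTS n hn]
    exact Finset.mem_add.2 ⟨z, hz, b n, Finset.max'_mem _ _, by omega⟩
  set W : ℕ → Finset ℤ := GMRchain S T a b with hWdef
  have hW0 : W 0 = S := rfl
  have hWsucc : ∀ j, W (j + 1) =
      ({b j - a j} : Finset ℤ) + (W j ∩ (({a j} : Finset ℤ) + T j)) := fun j => rfl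
  -- W j ⊆ S
  have hWsub : ∀ j, j ≤ k → W j ⊆ S := by
    intro j
    induction j with
    | zero => intro _; rw [hW0]
    | succ j _ =>
      intro hjk
      rw [hWsucc j]
      have h1 : ({b j - a j} : Finset ℤ) + (W j ∩ (({a j} : Finset ℤ) + T j)) ⊆
          ({b j - a j} : Finset ℤ) + (({a j} : Finset ℤ) + T j) :=
        Finset.add_subset_add_left Finset.inter_subset_right
      refine h1.trans ?_
      rw [← add_assoc, Finset.singleton_add_singleton, sub_add_cancel]
      exact hbsub j (by omega)
  -- lower bound invariant for W j
  have hLW : ∀ j, j ≤ k → ∀ x ∈ W j,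
      ((∑ n ∈ range j, b n) + ∑ n ∈ Finset.Ico j k, a n) ≤ x := by
    intro j
    induction j with
    | zero =>
      intro _ x hx
      rw [hW0] at hx
      have := L1 (range k) x hx
      simpa [Nat.Ico_zero_eq_range] using this
    | succ j ih =>
      intro hjk x hx
      rw [hWsucc j] at hx
      rcases Finset.mem_add.1 hx with ⟨y, hy, z, hz, hyz⟩
      rw [Finset.mem_singleton] at hy
      have hzW : z ∈ W j := (Finset.mem_inter.1 hz).1
      have hlow := ih (by omega) z hzW
      have hjk' : j < k := by omega
      have hsplit : (∑ n ∈ Finset.Ico j k, a n)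
          = a j + ∑ n ∈ Finset.Ico (j + 1) k, a n := by
        rw [← Finset.insert_Ico_add_one_left_eq_Ico hjk', Finset.sum_insert]
        simp
      have hrange : (∑ n ∈ range (j + 1), b n) = (∑ n ∈ range j, b n) + b j :=
        Finset.sum_range_succ b j
      rw [hsplit] at hlow
      omega
  -- the telescoping chain
  have chain : ∀ j, 1 ≤ j → j ≤ k →
      (∑ n ∈ range j, (T n).card) ≤ (j - 1) * S.card + (W j).card := by
    intro j
    induction j with
    | zero => intro h; omega
    | succ j ih =>
      intro _ hjk
      by_cases hj0 : j = 0
      · subst hj0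
        have h0k : 0 < k := by omega
        rw [Finset.sum_range_one, hWsucc 0, hW0,
          Finset.inter_eq_right.2 (hYsub 0 h0k)]
        rw [Finset.card_singleton_add, Finset.card_singleton_add]
        omega
      · have hj1 : 1 ≤ j := by omega
        have hjk' : j ≤ k := by omega
        have hjk'' : j < k := by omega
        have IH := ih hj1 hjk'
        rw [Finset.sum_range_succ]
        -- key step
        have hkey : (W j).card + (T j).card ≤ S.card + (W (j + 1)).card := by
          have hcard1 : (T j).card = (({a j} : Finset ℤ) + T j).card :=
            (Finset.card_singleton_add _ _).symm
          have hcard2 : (W (j + 1)).card = (W j ∩ (({a j} : Finset ℤ) + T j)).card := by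
            rw [hWsucc j, Finset.card_singleton_add]
          have hui := Finset.card_union_add_card_inter (W j) (({a j} : Finset ℤ) + T j)
          have hsub : (W j ∪ (({a j} : Finset ℤ) + T j)).card ≤ S.card :=
            Finset.card_le_card (Finset.union_subset (hWsub j hjk') (hYsub j hjk''))
          omega
        have hmul : (j + 1 - 1) * S.card = (j - 1) * S.card + S.card := by
          have : j - 1 + 1 = j := by omega
          calc (j + 1 - 1) * S.card = (j - 1 + 1) * S.card := by rw [Nat.add_sub_cancel, this]
          _ = (j - 1) * S.card + S.card := by ring
        omega
  -- the final set is (at most) a singleton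
  obtain ⟨m, rfl⟩ : ∃ m, k = m + 1 := ⟨k - 1, by omega⟩
  have hmk : m < m + 1 := by omega
  have hTm : T m = ∑ n ∈ range m, B n := by
    rw [hTdef]
    simp only
    rw [Finset.range_add_one, Finset.erase_insert Finset.notMem_range_self]
  have hfinal : (W (m + 1)).card ≤ 1 := by
    rw [hWsucc m, Finset.card_singleton_add]
    have hsub : W m ∩ (({a m} : Finset ℤ) + T m) ⊆
        ({(∑ n ∈ range m, b n) + a m} : Finset ℤ) := by
      intro x hx
      rcases Finset.mem_inter.1 hx with ⟨hx1, hx2⟩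
      have hlow := hLW m (by omega) x hx1
      rw [Nat.Ico_succ_singleton, Finset.sum_singleton] at hlow
      rcases Finset.mem_add.1 hx2 with ⟨y, hy, z, hz, hyz⟩
      rw [Finset.mem_singleton] at hy
      rw [hTm] at hz
      have hhigh := L2 (range m) z hz
      rw [Finset.mem_singleton]
      omega
    calc (W m ∩ (({a m} : Finset ℤ) + T m)).card ≤ ({(∑ n ∈ range m, b n) + a m} : Finset ℤ).card :=
          Finset.card_le_card hsub
      _ = 1 := Finset.card_singleton _
  have hchain := chain (m + 1) (by omega) (le_refl _)
  -- rewrite the goal sums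
  have hEq : ∀ i : Fin (m + 1), (∑ j ∈ Finset.univ.erase i, A j) = T i.val := by
    intro i
    have himg : (range (m + 1)).erase (i : ℕ) = (Finset.univ.erase i).image Fin.val := by
      ext n
      simp only [Finset.mem_erase, Finset.mem_range, Finset.mem_image, Finset.mem_univ, true_and]
      constructor
      · rintro ⟨hne, hlt⟩
        exact ⟨⟨n, hlt⟩, by simpa [Fin.ext_iff] using hne, rfl⟩
      · rintro ⟨j, hji, rfl⟩
        exact ⟨by simpa [Fin.ext_iff] using hji, j.isLt⟩
    rw [hTdef]
    simp only
    rw [himg, Finset.sum_image (fun x _ y _ h => Fin.val_injective h)]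
    refine Finset.sum_congr rfl ?_
    intro j _
    simp [hBdef]
    intro h
    exact absurd j.isLt (by omega)
  have hLHS : (∑ i, (∑ j ∈ Finset.univ.erase i, A j).card)
      = ∑ n ∈ range (m + 1), (T n).card := by
    rw [← Fin.sum_univ_eq_sum_range (fun n => (T n).card) (m + 1)]
    exact Finset.sum_congr rfl fun i _ => by rw [hEq i]
  have hRHS : (∑ i, A i) = S := by
    rw [hSdef, ← Fin.sum_univ_eq_sum_range (fun n => B n) (m + 1)]
    exact Finset.sum_congr rfl fun i _ => by simp [hBdef]; intro h; exact absurd i.isLt (by omega)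
  rw [hLHS, hRHS]
  omega
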